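/- There is a universal constant C such that for all finitely supported coefficient sequences (a_{n,i}) (n ≥ 0, 1 ≤ i ≤ 2^n), Σ_{n=0}^∞ (Σ_{i=1}^{2^n} a_{n,i}²)^{1/2} ≤ C · ‖(Σ_{n,i} a_{n,i}² h_{n,i}² / ‖h_{n,i}‖_{L¹}²)^{1/2}‖_{L¹}. -/

import Mathlib

/-- The Haar function `h_{n,i}` on `(0,1)`: `1` on `[(i−1)/2^n, (2i−1)/2^{n+1})`,
`−1` on `[(2i−1)/2^{n+1}, i/2^n)`, `0` elsewhere. -/
noncomputable def haar (n i : ℕ) : ℝ → ℝ := fun t =>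
  if ((i:ℝ) - 1) / 2 ^ n ≤ t ∧ t < (2 * (i:ℝ) - 1) / 2 ^ (n + 1) then 1
  else if (2 * (i:ℝ) - 1) / 2 ^ (n + 1) ≤ t ∧ t < (i:ℝ) / 2 ^ n then -1
  else 0

open Finset MeasureTheory

namespace DyadicH1

/-- Grouping a sum over `range (K * L)` into blocks of length `L`. -/
lemma sum_range_mul {M : Type*} [AddCommMonoid M] (f : ℕ → M) (K L : ℕ) :
    ∑ j ∈ range (K * L), f j = ∑ q ∈ range K, ∑ r ∈ range L, f (L * q + r) := by
  induction K with
  | zero => simp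
  | succ K ih =>
    rw [Finset.sum_range_succ, ← ih, Nat.succ_mul]
    rw [Finset.range_eq_Ico, ← Finset.sum_Ico_consecutive f (Nat.zero_le (K * L))
      (Nat.le_add_right _ _), ← Finset.range_eq_Ico]
    congr 1
    rw [Finset.sum_Ico_eq_sum_range]
    simp only [Nat.add_sub_cancel_left]
    exact Finset.sum_congr rfl fun r _ => by rw [Nat.mul_comm L K]

noncomputable def xn (a : ℕ → ℕ → ℝ) (n : ℕ) : ℝ := Real.sqrt (∑ i ∈ Icc 1 (2 ^ n), a n i ^ 2)

noncomputable def bb (a : ℕ → ℕ → ℝ) (n i : ℕ) : ℝ := if xn a n = 0 then 0 else a n i / xn a n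

def idx (N n j : ℕ) : ℕ := j / 2 ^ (N - n) + 1

noncomputable def uu (N : ℕ) (a : ℕ → ℕ → ℝ) (n j : ℕ) : ℝ := 2 ^ n * |a n (idx N n j)|

noncomputable def vv (N : ℕ) (a : ℕ → ℕ → ℝ) (n j : ℕ) : ℝ := |bb a n (idx N n j)|

noncomputable def sg (N : ℕ) (a : ℕ → ℕ → ℝ) (n j : ℕ) : ℝ :=
  Real.sqrt (∑ m ∈ range n, uu N a m j ^ 2)

variable {N : ℕ} {a : ℕ → ℕ → ℝ}

lemma xn_nonneg (a : ℕ → ℕ → ℝ) (n : ℕ) : 0 ≤ xn a n := Real.sqrt_nonneg _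

lemma xn_sq (a : ℕ → ℕ → ℝ) (n : ℕ) : xn a n ^ 2 = ∑ i ∈ Icc 1 (2 ^ n), a n i ^ 2 :=
  Real.sq_sqrt (Finset.sum_nonneg fun i _ => sq_nonneg _)

lemma sum_bb_sq_le_one (a : ℕ → ℕ → ℝ) (n : ℕ) : ∑ i ∈ Icc 1 (2 ^ n), bb a n i ^ 2 ≤ 1 := by
  unfold bb
  by_cases h : xn a n = 0
  · simp [h]
  · simp only [h, if_false, div_pow]
    rw [← Finset.sum_div, ← xn_sq a n, div_self (by positivity)]

lemma xn_eq_sum_ab (a : ℕ → ℕ → ℝ) (n : ℕ) :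
    xn a n = ∑ i ∈ Icc 1 (2 ^ n), a n i * bb a n i := by
  unfold bb
  by_cases h : xn a n = 0
  · simp [h]
  · simp only [h, if_false]
    have : ∀ i, a n i * (a n i / xn a n) = a n i ^ 2 / xn a n := fun i => by ring
    simp_rw [this]
    rw [← Finset.sum_div, ← xn_sq a n, sq, mul_div_assoc, div_self h, mul_one]

lemma sg_nonneg (N : ℕ) (a : ℕ → ℕ → ℝ) (n j : ℕ) : 0 ≤ sg N a n j := Real.sqrt_nonneg _

lemma sg_sq (N : ℕ) (a : ℕ → ℕ → ℝ) (n j : ℕ) :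
    sg N a n j ^ 2 = ∑ m ∈ range n, uu N a m j ^ 2 :=
  Real.sq_sqrt (Finset.sum_nonneg fun m _ => sq_nonneg _)

lemma sg_mono (N : ℕ) (a : ℕ → ℕ → ℝ) (n j : ℕ) : sg N a n j ≤ sg N a (n + 1) j := by
  apply Real.sqrt_le_sqrt
  rw [Finset.sum_range_succ]
  nlinarith [sq_nonneg (uu N a n j)]

lemma uu_nonneg (N : ℕ) (a : ℕ → ℕ → ℝ) (n j : ℕ) : 0 ≤ uu N a n j := by
  unfold uu; positivity

lemma uu_eq (N : ℕ) (a : ℕ → ℕ → ℝ) (n j : ℕ) :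
    uu N a n j = Real.sqrt (sg N a (n + 1) j - sg N a n j) *
      Real.sqrt (sg N a (n + 1) j + sg N a n j) := by
  rw [← Real.sqrt_mul (by linarith [sg_mono N a n j])]
  have : (sg N a (n + 1) j - sg N a n j) * (sg N a (n + 1) j + sg N a n j)
      = sg N a (n + 1) j ^ 2 - sg N a n j ^ 2 := by ring
  rw [this, sg_sq, sg_sq, Finset.sum_range_succ, add_sub_cancel_left,
    Real.sqrt_sq (uu_nonneg N a n j)]

lemma sg_zero (N : ℕ) (a : ℕ → ℕ → ℝ) (j : ℕ) : sg N a 0 j = 0 := by simp [sg]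

lemma sum_T_eq (N : ℕ) (a : ℕ → ℕ → ℝ) (j n : ℕ) :
    ∑ m ∈ range n, (sg N a (m + 1) j - sg N a m j) = sg N a n j := by
  rw [Finset.sum_range_sub (fun m => sg N a m j), sg_zero, sub_zero]


/-- The level-`n` index depends only on the level-`m` quotient when `n ≤ m ≤ N`. -/
lemma idx_congr {N n m j j' : ℕ} (hnm : n ≤ m) (hmN : m ≤ N)
    (h : j / 2 ^ (N - m) = j' / 2 ^ (N - m)) : idx N n j = idx N n j' := by
  unfold idx
  have key : ∀ k : ℕ, k / 2 ^ (N - n) = (k / 2 ^ (N - m)) / 2 ^ (m - n) := by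
    intro k
    rw [Nat.div_div_eq_div_mul, ← pow_add]
    congr 2
    omega
  rw [key j, key j', h]

lemma uu_congr {N n m j j' : ℕ} (hnm : n ≤ m) (hmN : m ≤ N)
    (h : j / 2 ^ (N - m) = j' / 2 ^ (N - m)) (a : ℕ → ℕ → ℝ) : uu N a n j = uu N a n j' := by
  unfold uu; rw [idx_congr hnm hmN h]

lemma sg_congr {N k m j j' : ℕ} (hk : k ≤ m + 1) (hmN : m ≤ N)
    (h : j / 2 ^ (N - m) = j' / 2 ^ (N - m)) (a : ℕ → ℕ → ℝ) : sg N a k j = sg N a k j' := by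
  unfold sg
  congr 1
  refine Finset.sum_congr rfl fun m' hm' => ?_
  rw [uu_congr (by simp at hm'; omega) hmN h a]

/-- Geometric sum bound. -/
lemma geom_bound (m N : ℕ) : ∑ n ∈ Ico m N, (2:ℝ) ^ (N - n) ≤ 2 * 2 ^ (N - m) := by
  rcases le_or_gt m N with hmN | hmN
  · rw [Finset.sum_Ico_eq_sum_range]
    have h1 : ∀ k ∈ range (N - m), (2:ℝ) ^ (N - (m + k)) = (2:ℝ) ^ ((N - m) - k) := by
      intro k hk; congr 1; omega
    rw [Finset.sum_congr rfl h1]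
    set K := N - m with hK
    have h2 : ∑ k ∈ range K, (2:ℝ) ^ (K - k) = ∑ k ∈ range K, (2:ℝ) ^ (k + 1) := by
      rw [← Finset.sum_range_reflect (fun k => (2:ℝ) ^ (k + 1)) K]
      refine Finset.sum_congr rfl fun k hk => ?_
      simp only [Finset.mem_range] at hk
      congr 1; omega
    rw [h2]
    have h3 : ∑ k ∈ range K, (2:ℝ) ^ (k + 1) = 2 * ((2:ℝ) ^ K - 1) := by
      simp only [pow_succ, mul_comm]
      rw [← Finset.mul_sum, geom_sum_eq (by norm_num : (2:ℝ) ≠ 1)]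
      norm_num
    rw [h3]
    have : (0:ℝ) < 2 ^ K := by positivity
    linarith
  · rw [Finset.Ico_eq_empty (by omega)]
    simp

/-- Single-level block bound for `vv`. -/
lemma vv_block_bound {N m n q : ℕ} (hmn : m ≤ n) (hnN : n ≤ N) (hq : q < 2 ^ m)
    (a : ℕ → ℕ → ℝ) :
    ∑ r ∈ range (2 ^ (N - m)), vv N a n (2 ^ (N - m) * q + r) ^ 2 ≤ (2:ℝ) ^ (N - n) := by
  have hsplit : 2 ^ (N - m) = 2 ^ (n - m) * 2 ^ (N - n) := by
    rw [← pow_add]; congr 1; omega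
  have hgrp := sum_range_mul (fun r => vv N a n (2 ^ (N - m) * q + r) ^ 2)
    (2 ^ (n - m)) (2 ^ (N - n))
  rw [← hsplit] at hgrp
  rw [hgrp]
  have hval : ∀ s r', r' < 2 ^ (N - n) → s < 2 ^ (n - m) →
      vv N a n (2 ^ (N - m) * q + (2 ^ (N - n) * s + r')) = |bb a n (2 ^ (n - m) * q + s + 1)| := by
    intro s r' hr' hs
    unfold vv idx
    congr 2
    have : 2 ^ (N - m) * q + (2 ^ (N - n) * s + r')
        = 2 ^ (N - n) * (2 ^ (n - m) * q + s) + r' := by rw [hsplit]; ring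
    rw [this, Nat.mul_add_div (by positivity), Nat.div_eq_of_lt hr']
  have hsum : ∀ s ∈ range (2 ^ (n - m)),
      ∑ r' ∈ range (2 ^ (N - n)), vv N a n (2 ^ (N - m) * q + (2 ^ (N - n) * s + r')) ^ 2
        = (2:ℝ) ^ (N - n) * bb a n (2 ^ (n - m) * q + s + 1) ^ 2 := by
    intro s hs
    simp only [Finset.mem_range] at hs
    rw [Finset.sum_congr rfl fun r' hr' => by
      rw [hval s r' (Finset.mem_range.mp hr') hs, sq_abs]]
    rw [Finset.sum_const, Finset.card_range, nsmul_eq_mul]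
    push_cast
    ring
  rw [Finset.sum_congr rfl hsum, ← Finset.mul_sum]
  have hsub : ∑ s ∈ range (2 ^ (n - m)), bb a n (2 ^ (n - m) * q + s + 1) ^ 2 ≤ 1 := by
    refine le_trans ?_ (sum_bb_sq_le_one a n)
    have hre : ∑ s ∈ range (2 ^ (n - m)), bb a n (2 ^ (n - m) * q + s + 1) ^ 2
        = ∑ i ∈ Ico (2 ^ (n - m) * q + 1) (2 ^ (n - m) * q + 1 + 2 ^ (n - m)), bb a n i ^ 2 := by
      rw [Finset.sum_Ico_eq_sum_range]
      simp only [Nat.add_sub_cancel_left]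
      refine Finset.sum_congr rfl fun s _ => ?_
      congr 2; omega
    rw [hre]
    refine Finset.sum_le_sum_of_subset_of_nonneg ?_ (fun i _ _ => sq_nonneg _)
    have : Icc 1 (2 ^ n) = Ico 1 (2 ^ n + 1) := by
      rw [Finset.Ico_add_one_right_eq_Icc]
    rw [this]
    apply Finset.Ico_subset_Ico
    · omega
    · have h1 : 2 ^ (n - m) * q + 2 ^ (n - m) ≤ 2 ^ n := by
        have : 2 ^ (n - m) * (q + 1) ≤ 2 ^ (n - m) * 2 ^ m := by
          apply Nat.mul_le_mul_left; omega
        calc 2 ^ (n - m) * q + 2 ^ (n - m) = 2 ^ (n - m) * (q + 1) := by ring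
          _ ≤ 2 ^ (n - m) * 2 ^ m := this
          _ = 2 ^ n := by rw [← pow_add]; congr 1; omega
      omega
  calc (2:ℝ) ^ (N - n) * ∑ s ∈ range (2 ^ (n - m)), bb a n (2 ^ (n - m) * q + s + 1) ^ 2
      ≤ (2:ℝ) ^ (N - n) * 1 := by
        apply mul_le_mul_of_nonneg_left hsub (by positivity)
    _ = (2:ℝ) ^ (N - n) := mul_one _


/-- The increment `T m` is constant on level-`m` blocks, and the tail square function of `g`
has block average at most `2`. -/
lemma key_per_level {N m : ℕ} (hm : m < N) (a : ℕ → ℕ → ℝ) :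
    ∑ j ∈ range (2 ^ N), (sg N a (m + 1) j - sg N a m j) * (∑ n ∈ Ico m N, vv N a n j ^ 2)
      ≤ 2 * ∑ j ∈ range (2 ^ N), (sg N a (m + 1) j - sg N a m j) := by
  have hmN : m ≤ N := hm.le
  set M := 2 ^ (N - m) with hM
  have hKM : 2 ^ m * M = 2 ^ N := by rw [hM, ← pow_add]; congr 1; omega
  have hMpos : 0 < M := by positivity
  have hTconst : ∀ q r, r < M → (sg N a (m + 1) (M * q + r) - sg N a m (M * q + r))
      = (sg N a (m + 1) (M * q) - sg N a m (M * q)) := by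
    intro q r hr
    have hquot : (M * q + r) / 2 ^ (N - m) = (M * q) / 2 ^ (N - m) := by
      rw [← hM, Nat.mul_add_div hMpos, Nat.div_eq_of_lt hr, Nat.mul_div_cancel_left _ hMpos,
        Nat.add_zero]
    rw [sg_congr (le_refl _) hmN hquot a, sg_congr (Nat.le_succ _) hmN hquot a]
  have hTnn : ∀ j, 0 ≤ sg N a (m + 1) j - sg N a m j := fun j => by
    linarith [sg_mono N a m j]
  rw [← hKM, sum_range_mul, sum_range_mul (fun j => sg N a (m + 1) j - sg N a m j)]
  rw [Finset.mul_sum]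
  apply Finset.sum_le_sum
  intro q hq
  simp only [Finset.mem_range] at hq
  have hblock : ∑ r ∈ range M, (∑ n ∈ Ico m N, vv N a n (M * q + r) ^ 2) ≤ 2 * M := by
    rw [Finset.sum_comm]
    have : ∀ n ∈ Ico m N, ∑ r ∈ range M, vv N a n (M * q + r) ^ 2 ≤ (2:ℝ) ^ (N - n) := by
      intro n hn
      simp only [Finset.mem_Ico] at hn
      exact vv_block_bound hn.1 hn.2.le hq a
    calc ∑ n ∈ Ico m N, ∑ r ∈ range M, vv N a n (M * q + r) ^ 2
        ≤ ∑ n ∈ Ico m N, (2:ℝ) ^ (N - n) := Finset.sum_le_sum this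
      _ ≤ 2 * 2 ^ (N - m) := geom_bound m N
      _ = 2 * M := by rw [hM]; push_cast; ring
  calc ∑ r ∈ range M, (sg N a (m + 1) (M * q + r) - sg N a m (M * q + r))
        * (∑ n ∈ Ico m N, vv N a n (M * q + r) ^ 2)
      = (sg N a (m + 1) (M * q) - sg N a m (M * q))
        * ∑ r ∈ range M, (∑ n ∈ Ico m N, vv N a n (M * q + r) ^ 2) := by
        rw [Finset.mul_sum]
        refine Finset.sum_congr rfl fun r hr => ?_
        rw [hTconst q r (Finset.mem_range.mp hr)]
    _ ≤ (sg N a (m + 1) (M * q) - sg N a m (M * q)) * (2 * M) := by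
        apply mul_le_mul_of_nonneg_left hblock (hTnn _)
    _ = 2 * ∑ r ∈ range M, (sg N a (m + 1) (M * q + r) - sg N a m (M * q + r)) := by
        rw [Finset.sum_congr rfl fun r hr => hTconst q r (Finset.mem_range.mp hr),
          Finset.sum_const, Finset.card_range, nsmul_eq_mul]
        ring

/-- Bound on the total weighted sum `∑_j W j ≤ 4 ∑_j S j`. -/
lemma W_bound (N : ℕ) (a : ℕ → ℕ → ℝ) :
    ∑ j ∈ range (2 ^ N), (∑ n ∈ range N, (sg N a (n + 1) j + sg N a n j) * vv N a n j ^ 2)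
      ≤ 4 * ∑ j ∈ range (2 ^ N), sg N a N j := by
  have step1 : ∀ j, ∑ n ∈ range N, (sg N a (n + 1) j + sg N a n j) * vv N a n j ^ 2
      ≤ 2 * ∑ n ∈ range N, sg N a (n + 1) j * vv N a n j ^ 2 := by
    intro j
    rw [Finset.mul_sum]
    apply Finset.sum_le_sum
    intro n _
    have := sg_mono N a n j
    nlinarith [sq_nonneg (vv N a n j), sg_nonneg N a n j]
  have step2 : ∀ j, ∑ n ∈ range N, sg N a (n + 1) j * vv N a n j ^ 2
      = ∑ m ∈ range N, (sg N a (m + 1) j - sg N a m j) * (∑ n ∈ Ico m N, vv N a n j ^ 2) := by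
    intro j
    have h1 : ∀ n ∈ range N, sg N a (n + 1) j * vv N a n j ^ 2
        = ∑ m ∈ range (n + 1), (sg N a (m + 1) j - sg N a m j) * vv N a n j ^ 2 := by
      intro n _
      rw [← Finset.sum_mul, sum_T_eq]
    rw [Finset.sum_congr rfl h1]
    rw [Finset.sum_comm' (t' := range N) (s' := fun m => Ico m N)
      (fun n m => by simp [Finset.mem_range, Finset.mem_Ico]; omega)]
    refine Finset.sum_congr rfl fun m _ => ?_
    rw [Finset.mul_sum]
  calc ∑ j ∈ range (2 ^ N), (∑ n ∈ range N, (sg N a (n + 1) j + sg N a n j) * vv N a n j ^ 2)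
      ≤ ∑ j ∈ range (2 ^ N), 2 * ∑ n ∈ range N, sg N a (n + 1) j * vv N a n j ^ 2 :=
        Finset.sum_le_sum fun j _ => step1 j
    _ = 2 * ∑ j ∈ range (2 ^ N), ∑ m ∈ range N,
          (sg N a (m + 1) j - sg N a m j) * (∑ n ∈ Ico m N, vv N a n j ^ 2) := by
        rw [← Finset.mul_sum]
        congr 1
        exact Finset.sum_congr rfl fun j _ => step2 j
    _ = 2 * ∑ m ∈ range N, ∑ j ∈ range (2 ^ N),
          (sg N a (m + 1) j - sg N a m j) * (∑ n ∈ Ico m N, vv N a n j ^ 2) := by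
        rw [Finset.sum_comm]
    _ ≤ 2 * ∑ m ∈ range N, 2 * ∑ j ∈ range (2 ^ N), (sg N a (m + 1) j - sg N a m j) := by
        have := fun m (hm : m ∈ range N) => key_per_level (Finset.mem_range.mp hm) a
        have h := Finset.sum_le_sum this
        nlinarith [h]
    _ = 4 * ∑ j ∈ range (2 ^ N), ∑ m ∈ range N, (sg N a (m + 1) j - sg N a m j) := by
        rw [← Finset.mul_sum, Finset.sum_comm]
        ring
    _ = 4 * ∑ j ∈ range (2 ^ N), sg N a N j := by
        congr 1
        exact Finset.sum_congr rfl fun j _ => sum_T_eq N a j N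


/-- Cauchy–Schwarz helper: from `a ≥ 0` and `a ^ 2 ≤ b * c` (with `b ≥ 0`),
conclude `a ≤ √b * √c`. -/
lemma le_sqrt_mul_sqrt {A B C : ℝ} (hA : 0 ≤ A) (hB : 0 ≤ B) (h : A ^ 2 ≤ B * C) :
    A ≤ Real.sqrt B * Real.sqrt C := by
  rw [← Real.sqrt_mul hB]
  calc A = Real.sqrt (A ^ 2) := (Real.sqrt_sq hA).symm
    _ ≤ Real.sqrt (B * C) := Real.sqrt_le_sqrt h

/-- Per-point Cauchy–Schwarz step. -/
lemma perj_CS (N : ℕ) (a : ℕ → ℕ → ℝ) (j : ℕ) :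
    ∑ n ∈ range N, uu N a n j * vv N a n j ≤
      Real.sqrt (sg N a N j) *
        Real.sqrt (∑ n ∈ range N, (sg N a (n + 1) j + sg N a n j) * vv N a n j ^ 2) := by
  have hrw : ∀ n ∈ range N, uu N a n j * vv N a n j
      = Real.sqrt (sg N a (n + 1) j - sg N a n j) *
        (Real.sqrt (sg N a (n + 1) j + sg N a n j) * vv N a n j) := by
    intro n _
    rw [uu_eq]; ring
  rw [Finset.sum_congr rfl hrw]
  have hCS := Finset.sum_mul_sq_le_sq_mul_sq (range N)
    (fun n => Real.sqrt (sg N a (n + 1) j - sg N a n j))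
    (fun n => Real.sqrt (sg N a (n + 1) j + sg N a n j) * vv N a n j)
  have hf2 : ∑ n ∈ range N, (Real.sqrt (sg N a (n + 1) j - sg N a n j)) ^ 2
      = sg N a N j := by
    rw [← sum_T_eq N a j N]
    refine Finset.sum_congr rfl fun n _ => ?_
    exact Real.sq_sqrt (by linarith [sg_mono N a n j])
  have hg2 : ∑ n ∈ range N, (Real.sqrt (sg N a (n + 1) j + sg N a n j) * vv N a n j) ^ 2
      = ∑ n ∈ range N, (sg N a (n + 1) j + sg N a n j) * vv N a n j ^ 2 := by
    refine Finset.sum_congr rfl fun n _ => ?_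
    rw [mul_pow, Real.sq_sqrt (by linarith [sg_nonneg N a n j, sg_nonneg N a (n + 1) j])]
  rw [hf2, hg2] at hCS
  refine le_sqrt_mul_sqrt ?_ (sg_nonneg N a N j) hCS
  refine Finset.sum_nonneg fun n _ => ?_
  have : 0 ≤ vv N a n j := abs_nonneg _
  positivity

/-- Step 0: expressing `xn` as a discretized pairing sum. -/
lemma xn_discretize {N n : ℕ} (hn : n ≤ N) (a : ℕ → ℕ → ℝ) :
    ∑ j ∈ range (2 ^ N), a n (idx N n j) * bb a n (idx N n j)
      = (2:ℝ) ^ (N - n) * xn a n := by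
  have hKM : 2 ^ n * 2 ^ (N - n) = 2 ^ N := by rw [← pow_add]; congr 1; omega
  rw [← hKM, sum_range_mul (fun j => a n (idx N n j) * bb a n (idx N n j))]
  have hidx : ∀ q r, r < 2 ^ (N - n) → idx N n (2 ^ (N - n) * q + r) = q + 1 := by
    intro q r hr
    unfold idx
    rw [Nat.mul_add_div (by positivity), Nat.div_eq_of_lt hr]
  have : ∀ q ∈ range (2 ^ n), ∑ r ∈ range (2 ^ (N - n)),
      a n (idx N n (2 ^ (N - n) * q + r)) * bb a n (idx N n (2 ^ (N - n) * q + r))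
        = (2:ℝ) ^ (N - n) * (a n (q + 1) * bb a n (q + 1)) := by
    intro q _
    rw [Finset.sum_congr rfl fun r hr => by rw [hidx q r (Finset.mem_range.mp hr)]]
    rw [Finset.sum_const, Finset.card_range, nsmul_eq_mul]
    push_cast; ring
  rw [Finset.sum_congr rfl this, ← Finset.mul_sum]
  congr 1
  rw [xn_eq_sum_ab]
  have : Icc 1 (2 ^ n) = Ico 1 (2 ^ n + 1) := by rw [Finset.Ico_add_one_right_eq_Icc]
  rw [this, Finset.sum_Ico_eq_sum_range]
  simp only [Nat.add_sub_cancel]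
  exact Finset.sum_congr rfl fun q _ => by rw [Nat.add_comm 1 q]

/-- The discrete main inequality. -/
theorem discrete_main (N : ℕ) (a : ℕ → ℕ → ℝ) :
    ∑ n ∈ range N, xn a n ≤ 2 * (((2:ℝ) ^ N)⁻¹ * ∑ j ∈ range (2 ^ N), sg N a N j) := by
  have h2N : (0:ℝ) < 2 ^ N := by positivity
  -- Step 0
  have step0 : ∑ n ∈ range N, xn a n
      = ((2:ℝ) ^ N)⁻¹ * ∑ n ∈ range N, (2:ℝ) ^ n *
          ∑ j ∈ range (2 ^ N), a n (idx N n j) * bb a n (idx N n j) := by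
    rw [Finset.mul_sum]
    refine Finset.sum_congr rfl fun n hn => ?_
    have hnN : n ≤ N := (Finset.mem_range.mp hn).le
    rw [xn_discretize hnN a]
    rw [← mul_assoc, ← mul_assoc]
    have : ((2:ℝ) ^ N)⁻¹ * 2 ^ n * 2 ^ (N - n) = 1 := by
      rw [mul_assoc, ← pow_add]
      have : n + (N - n) = N := by omega
      rw [this]
      field_simp
    rw [this, one_mul]
  rw [step0]
  -- bound the pairing by |a|·|b| = uu·vv
  have step1 : ∑ n ∈ range N, (2:ℝ) ^ n *
      ∑ j ∈ range (2 ^ N), a n (idx N n j) * bb a n (idx N n j)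
        ≤ ∑ j ∈ range (2 ^ N), ∑ n ∈ range N, uu N a n j * vv N a n j := by
    rw [Finset.sum_comm]
    apply Finset.sum_le_sum
    intro n _
    rw [Finset.mul_sum]
    apply Finset.sum_le_sum
    intro j _
    unfold uu vv
    calc (2:ℝ) ^ n * (a n (idx N n j) * bb a n (idx N n j))
        ≤ (2:ℝ) ^ n * (|a n (idx N n j)| * |bb a n (idx N n j)|) := by
          apply mul_le_mul_of_nonneg_left _ (by positivity)
          rw [← abs_mul]
          exact le_abs_self _
      _ = 2 ^ n * |a n (idx N n j)| * |bb a n (idx N n j)| := by ring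
  -- Cauchy–Schwarz over j
  set S := fun j => sg N a N j with hS
  set W := fun j => ∑ n ∈ range N, (sg N a (n + 1) j + sg N a n j) * vv N a n j ^ 2 with hW
  have hSnn : ∀ j, 0 ≤ S j := fun j => sg_nonneg N a N j
  have hWnn : ∀ j, 0 ≤ W j := by
    intro j
    refine Finset.sum_nonneg fun n _ => ?_
    have h1 := sg_nonneg N a n j
    have h2 := sg_nonneg N a (n + 1) j
    positivity
  have step2 : ∑ j ∈ range (2 ^ N), ∑ n ∈ range N, uu N a n j * vv N a n j
      ≤ ∑ j ∈ range (2 ^ N), Real.sqrt (S j) * Real.sqrt (W j) :=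
    Finset.sum_le_sum fun j _ => perj_CS N a j
  have step3 : ∑ j ∈ range (2 ^ N), Real.sqrt (S j) * Real.sqrt (W j)
      ≤ Real.sqrt (∑ j ∈ range (2 ^ N), S j) * Real.sqrt (∑ j ∈ range (2 ^ N), W j) := by
    have hCS := Finset.sum_mul_sq_le_sq_mul_sq (range (2 ^ N))
      (fun j => Real.sqrt (S j)) (fun j => Real.sqrt (W j))
    simp only [Real.sq_sqrt (hSnn _), Real.sq_sqrt (hWnn _)] at hCS
    exact le_sqrt_mul_sqrt
      (Finset.sum_nonneg fun j _ => mul_nonneg (Real.sqrt_nonneg _) (Real.sqrt_nonneg _))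
      (Finset.sum_nonneg fun j _ => hSnn j) hCS
  have step4 : Real.sqrt (∑ j ∈ range (2 ^ N), W j)
      ≤ 2 * Real.sqrt (∑ j ∈ range (2 ^ N), S j) := by
    have h4 := W_bound N a
    calc Real.sqrt (∑ j ∈ range (2 ^ N), W j)
        ≤ Real.sqrt (4 * ∑ j ∈ range (2 ^ N), S j) := Real.sqrt_le_sqrt h4
      _ = 2 * Real.sqrt (∑ j ∈ range (2 ^ N), S j) := by
          rw [show (4:ℝ) = 2 ^ 2 by norm_num, Real.sqrt_mul (by positivity),
            Real.sqrt_sq (by norm_num : (0:ℝ) ≤ 2)]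
  have hfinal : ∑ n ∈ range N, (2:ℝ) ^ n *
      ∑ j ∈ range (2 ^ N), a n (idx N n j) * bb a n (idx N n j)
        ≤ 2 * ∑ j ∈ range (2 ^ N), S j := by
    have hs := Real.sqrt_nonneg (∑ j ∈ range (2 ^ N), S j)
    calc ∑ n ∈ range N, (2:ℝ) ^ n *
        ∑ j ∈ range (2 ^ N), a n (idx N n j) * bb a n (idx N n j)
        ≤ ∑ j ∈ range (2 ^ N), ∑ n ∈ range N, uu N a n j * vv N a n j := step1
      _ ≤ ∑ j ∈ range (2 ^ N), Real.sqrt (S j) * Real.sqrt (W j) := step2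
      _ ≤ Real.sqrt (∑ j ∈ range (2 ^ N), S j) * Real.sqrt (∑ j ∈ range (2 ^ N), W j) := step3
      _ ≤ Real.sqrt (∑ j ∈ range (2 ^ N), S j) * (2 * Real.sqrt (∑ j ∈ range (2 ^ N), S j)) :=
          mul_le_mul_of_nonneg_left step4 (Real.sqrt_nonneg _)
      _ = 2 * (Real.sqrt (∑ j ∈ range (2 ^ N), S j) * Real.sqrt (∑ j ∈ range (2 ^ N), S j)) := by
          ring
      _ = 2 * ∑ j ∈ range (2 ^ N), S j := by
          rw [Real.mul_self_sqrt (Finset.sum_nonneg fun j _ => hSnn j)]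
  calc ((2:ℝ) ^ N)⁻¹ * ∑ n ∈ range N, (2:ℝ) ^ n *
        ∑ j ∈ range (2 ^ N), a n (idx N n j) * bb a n (idx N n j)
      ≤ ((2:ℝ) ^ N)⁻¹ * (2 * ∑ j ∈ range (2 ^ N), S j) := by
        apply mul_le_mul_of_nonneg_left hfinal (by positivity)
    _ = 2 * (((2:ℝ) ^ N)⁻¹ * ∑ j ∈ range (2 ^ N), sg N a N j) := by ring


lemma haar_sq_le_one (n i : ℕ) (t : ℝ) : haar n i t ^ 2 ≤ 1 := by
  unfold haar
  split_ifs <;> norm_num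

lemma haar_measurable (n i : ℕ) : Measurable (haar n i) := by
  unfold haar
  refine Measurable.ite ?_ measurable_const (Measurable.ite ?_ measurable_const measurable_const)
  · simp only [Set.setOf_and]
    exact (measurableSet_le measurable_const measurable_id).inter
      (measurableSet_lt measurable_id measurable_const)
  · simp only [Set.setOf_and]
    exact (measurableSet_le measurable_const measurable_id).inter
      (measurableSet_lt measurable_id measurable_const)

lemma haar_sq_one {n i : ℕ} {t : ℝ} (hlo : ((i:ℝ) - 1) / 2 ^ n ≤ t)
    (hhi : t < (i:ℝ) / 2 ^ n) : haar n i t ^ 2 = 1 := by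
  unfold haar
  by_cases h : t < (2 * (i:ℝ) - 1) / 2 ^ (n + 1)
  · rw [if_pos ⟨hlo, h⟩]; norm_num
  · rw [if_neg (fun hc => h hc.2), if_pos ⟨le_of_not_gt h, hhi⟩]; norm_num

/-- For `t` in the `j`-th level-`N` open interval, the Haar function for the containing
level-`n` interval has square one. -/
lemma haar_idx_sq {N n j : ℕ} (hn : n ≤ N) (hj : j < 2 ^ N) {t : ℝ}
    (ht : t ∈ Set.Ioo ((j:ℝ) / 2 ^ N) (((j:ℝ) + 1) / 2 ^ N)) :
    haar n (idx N n j) t ^ 2 = 1 := by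
  obtain ⟨ht1, ht2⟩ := ht
  set q := j / 2 ^ (N - n) with hq
  have hMpos : 0 < 2 ^ (N - n) := by positivity
  have hpow : 2 ^ (N - n) * 2 ^ n = 2 ^ N := by rw [← pow_add]; congr 1; omega
  have h2n : (0:ℝ) < 2 ^ n := by positivity
  have h2N : (0:ℝ) < 2 ^ N := by positivity
  have hcast : ((2:ℝ) ^ (N - n)) * 2 ^ n = 2 ^ N := by
    rw [← pow_add]; congr 1; omega
  have hlo : ((idx N n j : ℝ) - 1) / 2 ^ n ≤ t := by
    have hidx : (idx N n j : ℝ) - 1 = (q : ℝ) := by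
      unfold idx; rw [← hq]; push_cast; ring
    rw [hidx]
    have h1 : (q : ℝ) / 2 ^ n ≤ (j : ℝ) / 2 ^ N := by
      rw [div_le_div_iff₀ h2n h2N]
      have hnat : q * 2 ^ N ≤ j * 2 ^ n := by
        calc q * 2 ^ N = q * 2 ^ (N - n) * 2 ^ n := by rw [← hpow]; ring
          _ ≤ j * 2 ^ n := by
              apply Nat.mul_le_mul_right
              rw [hq]; exact Nat.div_mul_le_self _ _
      exact_mod_cast hnat
    linarith
  have hhi : t < (idx N n j : ℝ) / 2 ^ n := by
    have hidx : (idx N n j : ℝ) = (q : ℝ) + 1 := by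
      unfold idx; rw [← hq]; push_cast; ring
    rw [hidx]
    have h1 : ((j : ℝ) + 1) / 2 ^ N ≤ ((q : ℝ) + 1) / 2 ^ n := by
      rw [div_le_div_iff₀ h2N h2n]
      have hnat : (j + 1) * 2 ^ n ≤ (q + 1) * 2 ^ N := by
        have hj1 : j + 1 ≤ (q + 1) * 2 ^ (N - n) := by
          have := Nat.lt_div_mul_add (a := j) hMpos
          rw [← hq] at this
          have hexp : (q + 1) * 2 ^ (N - n) = q * 2 ^ (N - n) + 2 ^ (N - n) := by ring
          omega
        calc (j + 1) * 2 ^ n ≤ (q + 1) * 2 ^ (N - n) * 2 ^ n := Nat.mul_le_mul_right _ hj1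
          _ = (q + 1) * 2 ^ N := by rw [mul_assoc, hpow]
      exact_mod_cast hnat
    linarith
  exact haar_sq_one hlo hhi

lemma idx_mem {N n j : ℕ} (hn : n ≤ N) (hj : j < 2 ^ N) : idx N n j ∈ Icc 1 (2 ^ n) := by
  simp only [Finset.mem_Icc]
  constructor
  · unfold idx; exact Nat.succ_le_succ (Nat.zero_le _)
  · unfold idx
    have hMpos : 0 < 2 ^ (N - n) := by positivity
    have : j / 2 ^ (N - n) < 2 ^ n := by
      rw [Nat.div_lt_iff_lt_mul hMpos]
      calc j < 2 ^ N := hj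
        _ = 2 ^ n * 2 ^ (N - n) := by rw [← pow_add]; congr 1; omega
    exact Nat.succ_le_of_lt this


/-- The square function as an explicit finite expression. -/
noncomputable def phi (N : ℕ) (a : ℕ → ℕ → ℝ) : ℝ → ℝ := fun t =>
  Real.sqrt (∑ n ∈ range N, ∑ i ∈ Icc 1 (2 ^ n),
    a n i ^ 2 * haar n i t ^ 2 * ((2:ℝ) ^ n) ^ 2)

lemma phi_nonneg (N : ℕ) (a : ℕ → ℕ → ℝ) (t : ℝ) : 0 ≤ phi N a t := Real.sqrt_nonneg _

lemma phi_meas (N : ℕ) (a : ℕ → ℕ → ℝ) : Measurable (phi N a) := by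
  apply Measurable.sqrt
  apply Finset.measurable_sum
  intro n _
  apply Finset.measurable_sum
  intro i _
  exact (((haar_measurable n i).pow_const 2).const_mul (a n i ^ 2)).mul_const (((2:ℝ) ^ n) ^ 2)

lemma phi_bound (N : ℕ) (a : ℕ → ℕ → ℝ) (t : ℝ) :
    phi N a t ≤ Real.sqrt (∑ n ∈ range N, ∑ i ∈ Icc 1 (2 ^ n),
      a n i ^ 2 * ((2:ℝ) ^ n) ^ 2) := by
  apply Real.sqrt_le_sqrt
  refine Finset.sum_le_sum fun n _ => Finset.sum_le_sum fun i _ => ?_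
  have h1 := haar_sq_le_one n i t
  calc a n i ^ 2 * haar n i t ^ 2 * ((2:ℝ) ^ n) ^ 2
      = (a n i ^ 2 * ((2:ℝ) ^ n) ^ 2) * haar n i t ^ 2 := by ring
    _ ≤ (a n i ^ 2 * ((2:ℝ) ^ n) ^ 2) * 1 := by
        apply mul_le_mul_of_nonneg_left h1 (by positivity)
    _ = a n i ^ 2 * ((2:ℝ) ^ n) ^ 2 := mul_one _

lemma phi_ge {N j : ℕ} (hj : j < 2 ^ N) (a : ℕ → ℕ → ℝ) {t : ℝ}
    (ht : t ∈ Set.Ioo ((j:ℝ) / 2 ^ N) (((j:ℝ) + 1) / 2 ^ N)) :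
    sg N a N j ≤ phi N a t := by
  apply Real.sqrt_le_sqrt
  refine Finset.sum_le_sum fun n hn => ?_
  have hnN : n ≤ N := (Finset.mem_range.mp hn).le
  have hterm : uu N a n j ^ 2
      = a n (idx N n j) ^ 2 * haar n (idx N n j) t ^ 2 * ((2:ℝ) ^ n) ^ 2 := by
    rw [haar_idx_sq hnN hj ht]
    unfold uu
    rw [mul_pow, sq_abs]
    ring
  rw [hterm]
  exact Finset.single_le_sum
    (f := fun i => a n i ^ 2 * haar n i t ^ 2 * ((2:ℝ) ^ n) ^ 2)
    (fun i _ => by positivity) (idx_mem hnN hj)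

/-- Lower bound for the integral by the discrete sum. -/
lemma integral_ge (N : ℕ) (a : ℕ → ℕ → ℝ) :
    ((2:ℝ) ^ N)⁻¹ * ∑ j ∈ range (2 ^ N), sg N a N j ≤ ∫ t in Set.Ioo (0:ℝ) 1, phi N a t := by
  have h2N : (0:ℝ) < 2 ^ N := by positivity
  set J : ℕ → Set ℝ := fun j => Set.Ioo ((j:ℝ) / 2 ^ N) (((j:ℝ) + 1) / 2 ^ N) with hJ
  have hJsub : ∀ j ∈ range (2 ^ N), J j ⊆ Set.Ioo (0:ℝ) 1 := by
    intro j hj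
    simp only [Finset.mem_range] at hj
    apply Set.Ioo_subset_Ioo
    · positivity
    · rw [div_le_one h2N]
      have : (j:ℝ) + 1 ≤ 2 ^ N := by exact_mod_cast Nat.succ_le_of_lt hj
      linarith
  have hInt : IntegrableOn (phi N a) (Set.Ioo (0:ℝ) 1) volume := by
    apply Measure.integrableOn_of_bounded
    · rw [Real.volume_Ioo]; exact ENNReal.ofReal_ne_top
    · exact (phi_meas N a).aestronglyMeasurable
    · exact Filter.Eventually.of_forall fun t => by
        rw [Real.norm_eq_abs, abs_of_nonneg (phi_nonneg N a t)]
        exact phi_bound N a t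
  have hmeas : ∀ j ∈ range (2 ^ N), MeasurableSet (J j) := fun j _ => measurableSet_Ioo
  have hdisj : Set.Pairwise (↑(range (2 ^ N))) (Function.onFun Disjoint J) := by
    intro i _ j _ hij
    have key : ∀ i j : ℕ, i < j → Disjoint (J i) (J j) := by
      intro i j h
      rw [hJ]
      simp only
      rw [Set.Ioo_disjoint_Ioo]
      have hij' : (i:ℝ) + 1 ≤ (j:ℝ) := by exact_mod_cast h
      have h1 : ((i:ℝ) + 1) / 2 ^ N ≤ (j:ℝ) / 2 ^ N := by gcongr
      calc min (((i:ℝ) + 1) / 2 ^ N) (((j:ℝ) + 1) / 2 ^ N) ≤ ((i:ℝ) + 1) / 2 ^ N :=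
            min_le_left _ _
        _ ≤ (j:ℝ) / 2 ^ N := h1
        _ ≤ max ((i:ℝ) / 2 ^ N) ((j:ℝ) / 2 ^ N) := le_max_right _ _
    rcases Nat.lt_or_ge i j with h | h
    · exact key i j h
    · exact (key j i (by omega)).symm
  have hIntJ : ∀ j ∈ range (2 ^ N), IntegrableOn (phi N a) (J j) volume := fun j hj =>
    hInt.mono_set (hJsub j hj)
  have hperj : ∀ j ∈ range (2 ^ N),
      sg N a N j * ((2:ℝ) ^ N)⁻¹ ≤ ∫ t in J j, phi N a t := by
    intro j hj
    simp only [Finset.mem_range] at hj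
    have hvol : (volume (J j)).toReal = ((2:ℝ) ^ N)⁻¹ := by
      rw [hJ]
      simp only
      rw [Real.volume_Ioo]
      have hd : ((j:ℝ) + 1) / 2 ^ N - (j:ℝ) / 2 ^ N = ((2:ℝ) ^ N)⁻¹ := by
        rw [div_sub_div_same, add_sub_cancel_left, inv_eq_one_div]
      rw [hd, ENNReal.toReal_ofReal (by positivity)]
    have := setIntegral_ge_of_const_le (μ := volume) (c := sg N a N j)
      (measurableSet_Ioo) (by rw [Real.volume_Ioo]; exact ENNReal.ofReal_ne_top)
      (fun t ht => phi_ge hj a ht) (hIntJ j (Finset.mem_range.mpr hj))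
    rw [show volume.real (Set.Ioo ((j:ℝ) / 2 ^ N) (((j:ℝ) + 1) / 2 ^ N)) = ((2:ℝ) ^ N)⁻¹ from hvol,
      smul_eq_mul] at this
    rw [mul_comm]
    exact this
  calc ((2:ℝ) ^ N)⁻¹ * ∑ j ∈ range (2 ^ N), sg N a N j
      = ∑ j ∈ range (2 ^ N), sg N a N j * ((2:ℝ) ^ N)⁻¹ := by
        rw [Finset.mul_sum]; exact Finset.sum_congr rfl fun j _ => by ring
    _ ≤ ∑ j ∈ range (2 ^ N), ∫ t in J j, phi N a t := Finset.sum_le_sum hperj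
    _ = ∫ t in ⋃ j ∈ range (2 ^ N), J j, phi N a t :=
        (integral_biUnion_finset (range (2 ^ N)) hmeas hdisj hIntJ).symm
    _ ≤ ∫ t in Set.Ioo (0:ℝ) 1, phi N a t := by
        apply setIntegral_mono_set hInt
        · exact Filter.Eventually.of_forall fun t => phi_nonneg N a t
        · exact HasSubset.Subset.eventuallyLE (Set.iUnion₂_subset hJsub)

end DyadicH1

/-- There is a universal constant `C` such that for all finitely supported
coefficients `(a_{n,i})`,
`Σₙ (Σᵢ a_{n,i}²)^{1/2} ≤ C ‖(Σ_{n,i} a_{n,i}² h_{n,i}²/‖h_{n,i}‖₁²)^{1/2}‖_{L¹}`.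
Here `‖h_{n,i}‖₁ = 2^{−n}`, so `1/‖h_{n,i}‖₁² = (2^n)²`. -/
theorem dyadic_H1_lower_bound :
    ∃ C : ℝ, 0 < C ∧ ∀ a : ℕ → ℕ → ℝ,
      (∃ N : ℕ, ∀ n, N ≤ n → ∀ i, a n i = 0) →
      ∑' n : ℕ, Real.sqrt (∑ i ∈ Finset.Icc (1:ℕ) (2 ^ n), (a n i) ^ 2) ≤
        C * ∫ t in Set.Ioo (0:ℝ) 1,
          Real.sqrt (∑' n : ℕ, ∑ i ∈ Finset.Icc (1:ℕ) (2 ^ n),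
            (a n i) ^ 2 * (haar n i t) ^ 2 * ((2:ℝ) ^ n) ^ 2) := by
  refine ⟨2, by norm_num, ?_⟩
  rintro a ⟨N, hN⟩
  have hL : ∑' n : ℕ, Real.sqrt (∑ i ∈ Finset.Icc (1:ℕ) (2 ^ n), (a n i) ^ 2)
      = ∑ n ∈ range N, DyadicH1.xn a n := by
    apply tsum_eq_sum
    intro n hn
    simp only [Finset.mem_range, not_lt] at hn
    have hz : ∑ i ∈ Finset.Icc (1:ℕ) (2 ^ n), (a n i) ^ 2 = 0 :=
      Finset.sum_eq_zero fun i _ => by simp [hN n hn i]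
    rw [hz, Real.sqrt_zero]
  have hIeq : ∀ t : ℝ, Real.sqrt (∑' n : ℕ, ∑ i ∈ Finset.Icc (1:ℕ) (2 ^ n),
      (a n i) ^ 2 * (haar n i t) ^ 2 * ((2:ℝ) ^ n) ^ 2) = DyadicH1.phi N a t := by
    intro t
    unfold DyadicH1.phi
    congr 1
    apply tsum_eq_sum
    intro n hn
    simp only [Finset.mem_range, not_lt] at hn
    exact Finset.sum_eq_zero fun i _ => by rw [hN n hn i]; ring
  have hint : (∫ t in Set.Ioo (0:ℝ) 1,
      Real.sqrt (∑' n : ℕ, ∑ i ∈ Finset.Icc (1:ℕ) (2 ^ n),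
        (a n i) ^ 2 * (haar n i t) ^ 2 * ((2:ℝ) ^ n) ^ 2))
      = ∫ t in Set.Ioo (0:ℝ) 1, DyadicH1.phi N a t :=
    integral_congr_ae (Filter.Eventually.of_forall fun t => hIeq t)
  rw [hL, hint]
  have h1 := DyadicH1.discrete_main N a
  have h2 := DyadicH1.integral_ge N a
  linarith
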